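/- Let R be a commutative ring, a ∈ R^* a unit with 1 − a ∈ R^*, and b ∈ R. Then in K^M_2(R[ε]) one has 2·{1 + (b/a)·ε, 1 + (b/(1−a))·ε} = 0. -/

import Mathlib

open TrivSqZeroExt

/-- The relations defining the Milnor K-group of a commutative ring `S`:
multilinearity relations and Steinberg relations (a generator `r₁ ⊗ … ⊗ r_n` with some
pair of consecutive entries summing to `1`). -/
def milnorRelSet (S : Type*) [CommRing S] (n : ℕ) : Set (FreeAbelianGroup (Fin n → Sˣ)) :=
  {x | ∃ (f : Fin n → Sˣ) (i : Fin n) (u v : Sˣ),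
      x = FreeAbelianGroup.of (Function.update f i (u * v))
        - FreeAbelianGroup.of (Function.update f i u)
        - FreeAbelianGroup.of (Function.update f i v)} ∪
  {x | ∃ (f : Fin n → Sˣ) (i j : Fin n), (i : ℕ) + 1 = (j : ℕ) ∧
      ((f i : S) + (f j : S) = 1) ∧ x = FreeAbelianGroup.of f}

/-- The `n`-th Milnor K-group of a commutative ring `S`: the quotient of `(Sˣ)^{⊗ n}`
(presented as the free abelian group on `n`-tuples of units, modulo multilinearity)
by the Steinberg relations. -/
def MilnorK (S : Type*) [CommRing S] (n : ℕ) : Type _ :=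
  FreeAbelianGroup (Fin n → Sˣ) ⧸ AddSubgroup.closure (milnorRelSet S n)

instance (S : Type*) [CommRing S] (n : ℕ) : AddCommGroup (MilnorK S n) :=
  QuotientAddGroup.Quotient.addCommGroup _

/-- The Milnor symbol `{r₁, …, r_n}`. -/
def milnorSymbol {S : Type*} [CommRing S] {n : ℕ} (f : Fin n → Sˣ) : MilnorK S n :=
  QuotientAddGroup.mk (FreeAbelianGroup.of f)

/-- Functoriality of Milnor K-groups in ring homomorphisms. -/
def MilnorK.map {S T : Type*} [CommRing S] [CommRing T] (φ : S →+* T) (n : ℕ) :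
    MilnorK S n →+ MilnorK T n := by
  refine QuotientAddGroup.lift _
    ((QuotientAddGroup.mk' (AddSubgroup.closure (milnorRelSet T n))).comp
      (FreeAbelianGroup.map (fun f => (Units.map (φ : S →* T)) ∘ f))) ?_
  intro x hx
  revert x hx
  rw [← SetLike.le_def, AddSubgroup.closure_le]
  rintro x (⟨f, i, u, v, rfl⟩ | ⟨f, i, j, hij, hsum, rfl⟩) <;>
    simp only [SetLike.mem_coe, AddMonoidHom.mem_ker, map_sub]
  · show milnorSymbol (Units.map (φ : S →* T) ∘ Function.update f i (u * v))
      - milnorSymbol (Units.map (φ : S →* T) ∘ Function.update f i u)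
      - milnorSymbol (Units.map (φ : S →* T) ∘ Function.update f i v) = (0 : MilnorK T n)
    unfold milnorSymbol
    change @Eq (FreeAbelianGroup (Fin n → Tˣ) ⧸ AddSubgroup.closure (milnorRelSet T n))
      (QuotientAddGroup.mk (s := AddSubgroup.closure (milnorRelSet T n)) _ - QuotientAddGroup.mk (s := AddSubgroup.closure (milnorRelSet T n)) _ - QuotientAddGroup.mk (s := AddSubgroup.closure (milnorRelSet T n)) _) 0
    rw [← QuotientAddGroup.mk_sub, ← QuotientAddGroup.mk_sub, QuotientAddGroup.eq_zero_iff]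
    refine AddSubgroup.subset_closure (Or.inl ⟨Units.map (φ : S →* T) ∘ f, i,
      Units.map (φ : S →* T) u, Units.map (φ : S →* T) v, ?_⟩)
    simp [Function.comp_update]
  · show milnorSymbol (Units.map (φ : S →* T) ∘ f) = (0 : MilnorK T n)
    unfold milnorSymbol
    change @Eq (FreeAbelianGroup (Fin n → Tˣ) ⧸ AddSubgroup.closure (milnorRelSet T n))
      (QuotientAddGroup.mk (s := AddSubgroup.closure (milnorRelSet T n)) _) 0
    rw [QuotientAddGroup.eq_zero_iff]
    refine AddSubgroup.subset_closure (Or.inr ⟨Units.map (φ : S →* T) ∘ f, i, j, hij, ?_, rfl⟩)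
    simp only [Function.comp_apply, Units.coe_map, MonoidHom.coe_coe]
    rw [← map_add, hsum, map_one]

/-- The unit `1 + r·ε` of the dual numbers, with inverse `1 - r·ε`. -/
def oneAddEps (R : Type*) [CommRing R] (r : R) : (DualNumber R)ˣ where
  val := 1 + inr r
  inv := 1 - inr r
  val_inv := by
    have h : (inr r : DualNumber R) * inr r = 0 := inr_mul_inr R r r
    ring_nf
    simp [pow_two, h]
  inv_val := by
    have h : (inr r : DualNumber R) * inr r = 0 := inr_mul_inr R r r
    ring_nf
    simp [pow_two, h]

/-- The `R`-algebra endomorphism `σ_a` of the dual numbers sending `ε` to `a·ε`. -/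
def epsScale (R : Type*) [CommRing R] (a : R) : DualNumber R →+* DualNumber R where
  toFun x := inl x.fst + inr (a * x.snd)
  map_one' := by simp
  map_mul' x y := by
    ext
    · simp
    · simp [snd_mul, smul_eq_mul, mul_comm, mul_add]
      ring
  map_zero' := by simp
  map_add' x y := by ext <;> simp [mul_add]


section MilnorAux

variable {S : Type*} [CommRing S]

private lemma milnor_upd0 (u v w : Sˣ) : Function.update ![u, v] 0 w = ![w, v] := by
  funext i; fin_cases i <;> simp

private lemma milnor_upd1 (u v w : Sˣ) : Function.update ![u, v] 1 w = ![u, w] := by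
  funext i; fin_cases i <;> simp

lemma symbol_mul_left (u v w : Sˣ) :
    milnorSymbol ![u * v, w] = milnorSymbol ![u, w] + milnorSymbol ![v, w] := by
  rw [eq_comm, ← sub_eq_zero]
  show _ - _ = (0 : MilnorK S 2)
  unfold milnorSymbol
  change @Eq (FreeAbelianGroup (Fin 2 → Sˣ) ⧸ AddSubgroup.closure (milnorRelSet S 2))
    (QuotientAddGroup.mk (s := AddSubgroup.closure (milnorRelSet S 2)) _ + QuotientAddGroup.mk (s := AddSubgroup.closure (milnorRelSet S 2)) _ - QuotientAddGroup.mk (s := AddSubgroup.closure (milnorRelSet S 2)) _) 0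
  rw [← QuotientAddGroup.mk_add, ← QuotientAddGroup.mk_sub, QuotientAddGroup.eq_zero_iff]
  have h : FreeAbelianGroup.of ![u, w] + FreeAbelianGroup.of ![v, w]
      - FreeAbelianGroup.of ![u * v, w]
      = -(FreeAbelianGroup.of ![u * v, w] - FreeAbelianGroup.of ![u, w]
          - FreeAbelianGroup.of ![v, w]) := by abel
  rw [h]
  refine neg_mem (AddSubgroup.subset_closure (Or.inl ⟨![u, w], 0, u, v, ?_⟩))
  rw [milnor_upd0, milnor_upd0, milnor_upd0]

lemma symbol_mul_right (u v w : Sˣ) :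
    milnorSymbol ![w, u * v] = milnorSymbol ![w, u] + milnorSymbol ![w, v] := by
  rw [eq_comm, ← sub_eq_zero]
  show _ - _ = (0 : MilnorK S 2)
  unfold milnorSymbol
  change @Eq (FreeAbelianGroup (Fin 2 → Sˣ) ⧸ AddSubgroup.closure (milnorRelSet S 2))
    (QuotientAddGroup.mk (s := AddSubgroup.closure (milnorRelSet S 2)) _ + QuotientAddGroup.mk (s := AddSubgroup.closure (milnorRelSet S 2)) _ - QuotientAddGroup.mk (s := AddSubgroup.closure (milnorRelSet S 2)) _) 0
  rw [← QuotientAddGroup.mk_add, ← QuotientAddGroup.mk_sub, QuotientAddGroup.eq_zero_iff]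
  have h : FreeAbelianGroup.of ![w, u] + FreeAbelianGroup.of ![w, v]
      - FreeAbelianGroup.of ![w, u * v]
      = -(FreeAbelianGroup.of ![w, u * v] - FreeAbelianGroup.of ![w, u]
          - FreeAbelianGroup.of ![w, v]) := by abel
  rw [h]
  refine neg_mem (AddSubgroup.subset_closure (Or.inl ⟨![w, u], 1, u, v, ?_⟩))
  rw [milnor_upd1, milnor_upd1, milnor_upd1]

lemma symbol_steinberg (u v : Sˣ) (h : (u : S) + (v : S) = 1) :
    milnorSymbol ![u, v] = (0 : MilnorK S 2) := by
  unfold milnorSymbol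
  change @Eq (FreeAbelianGroup (Fin 2 → Sˣ) ⧸ AddSubgroup.closure (milnorRelSet S 2))
    (QuotientAddGroup.mk (s := AddSubgroup.closure (milnorRelSet S 2)) _) 0
  rw [QuotientAddGroup.eq_zero_iff]
  exact AddSubgroup.subset_closure (Or.inr ⟨![u, v], 0, 1, rfl, by simpa using h, rfl⟩)

lemma symbol_one_left (w : Sˣ) : milnorSymbol ![(1 : Sˣ), w] = (0 : MilnorK S 2) := by
  have h := symbol_mul_left (1 : Sˣ) 1 w
  rw [mul_one] at h
  exact left_eq_add.mp h

lemma symbol_one_right (w : Sˣ) : milnorSymbol ![w, (1 : Sˣ)] = (0 : MilnorK S 2) := by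
  have h := symbol_mul_right (1 : Sˣ) 1 w
  rw [mul_one] at h
  exact left_eq_add.mp h

lemma symbol_inv_left (u w : Sˣ) :
    milnorSymbol ![u⁻¹, w] = -(milnorSymbol ![u, w] : MilnorK S 2) := by
  have h := symbol_mul_left u u⁻¹ w
  rw [mul_inv_cancel, symbol_one_left] at h
  exact eq_neg_of_add_eq_zero_right h.symm

lemma symbol_inv_right (u w : Sˣ) :
    milnorSymbol ![w, u⁻¹] = -(milnorSymbol ![w, u] : MilnorK S 2) := by
  have h := symbol_mul_right u u⁻¹ w
  rw [mul_inv_cancel, symbol_one_right] at h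
  exact eq_neg_of_add_eq_zero_right h.symm

end MilnorAux

section DualAux

variable {R : Type*} [CommRing R]

lemma oneAddEps_mul (r s : R) : oneAddEps R r * oneAddEps R s = oneAddEps R (r + s) := by
  apply Units.ext
  show ((1 + inr r) * (1 + inr s) : DualNumber R) = 1 + inr (r + s)
  ext <;> simp [snd_mul, add_comm]

lemma oneAddEps_zero : oneAddEps R 0 = 1 := by
  apply Units.ext; show (1 + inr (0:R) : DualNumber R) = 1; simp

lemma oneAddEps_neg (r : R) : oneAddEps R (-r) = (oneAddEps R r)⁻¹ :=
  eq_inv_of_mul_eq_one_left (by rw [oneAddEps_mul, neg_add_cancel, oneAddEps_zero])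

/-- The unit `inl a` of the dual numbers, for `a` a unit of `R`. -/
noncomputable def inlUnit (a : Rˣ) : (DualNumber R)ˣ :=
  Units.map ((inlHom R R : R →+* DualNumber R) : R →* DualNumber R) a

lemma inlUnit_val (a : Rˣ) : (inlUnit a : DualNumber R) = inl (a : R) := rfl

lemma steinberg_val (a u : Rˣ) (hu : (u : R) = 1 - (a : R)) (b : R) :
    ((inlUnit a * oneAddEps R (b * ((a⁻¹:Rˣ):R)) : (DualNumber R)ˣ) : DualNumber R)
      + ((inlUnit u * oneAddEps R (-(b * ((u⁻¹:Rˣ):R))) : (DualNumber R)ˣ) :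
        DualNumber R) = 1 := by
  show (inl (a:R) * (1 + inr (b * ((a⁻¹:Rˣ):R))) : DualNumber R)
      + inl (u:R) * (1 + inr (-(b * ((u⁻¹:Rˣ):R)))) = 1
  have h1 : ((a:R)) * (b * ((a⁻¹:Rˣ):R)) = b := by
    rw [mul_comm b, ← mul_assoc, Units.mul_inv, one_mul]
  have h2 : ((u:R)) * (b * ((u⁻¹:Rˣ):R)) = b := by
    rw [mul_comm b, ← mul_assoc, Units.mul_inv, one_mul]
  ext
  · simp [hu]
  · simp [snd_mul, h1, h2]

end DualAux

/-- for a unit `a` with `1 - a` a unit (witnessed by the unit `u` with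
`↑u = 1 - a`) and any `b ∈ R`, one has `2·{1 + (b/a)ε, 1 + (b/(1−a))ε} = 0` in
`K^M_2(R[ε])`. -/
theorem stmt_11 (R : Type*) [CommRing R] (a u : Rˣ) (hu : (u : R) = 1 - (a : R)) (b : R) :
    (2 : ℤ) • milnorSymbol ![oneAddEps R (b * ((a⁻¹ : Rˣ) : R)),
        oneAddEps R (b * ((u⁻¹ : Rˣ) : R))] = (0 : MilnorK (DualNumber R) 2) := by
  have hA1 : milnorSymbol ![inlUnit a * oneAddEps R (b * ((a⁻¹:Rˣ):R)),
      inlUnit u * oneAddEps R (-(b * ((u⁻¹:Rˣ):R)))] = (0 : MilnorK (DualNumber R) 2) :=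
    symbol_steinberg _ _ (steinberg_val a u hu b)
  have hA2 : milnorSymbol ![inlUnit a * oneAddEps R (-(b * ((a⁻¹:Rˣ):R))),
      inlUnit u * oneAddEps R (b * ((u⁻¹:Rˣ):R))] = (0 : MilnorK (DualNumber R) 2) := by
    have h := symbol_steinberg _ _ (steinberg_val a u hu (-b))
    simpa [neg_mul, neg_neg] using h
  have hAU : milnorSymbol ![inlUnit a, inlUnit u] = (0 : MilnorK (DualNumber R) 2) := by
    refine symbol_steinberg _ _ ?_
    rw [inlUnit_val, inlUnit_val]
    ext <;> simp [hu]
  have e1 : (0 : MilnorK (DualNumber R) 2)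
      = -milnorSymbol ![inlUnit a, oneAddEps R (b * ((u⁻¹:Rˣ):R))]
        + milnorSymbol ![oneAddEps R (b * ((a⁻¹:Rˣ):R)), inlUnit u]
        + -milnorSymbol ![oneAddEps R (b * ((a⁻¹:Rˣ):R)),
            oneAddEps R (b * ((u⁻¹:Rˣ):R))] := by
    rw [← hA1]
    simp only [symbol_mul_left, symbol_mul_right, oneAddEps_neg, symbol_inv_right,
      symbol_inv_left, hAU]
    abel
  have e2 : (0 : MilnorK (DualNumber R) 2)
      = milnorSymbol ![inlUnit a, oneAddEps R (b * ((u⁻¹:Rˣ):R))]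
        + -milnorSymbol ![oneAddEps R (b * ((a⁻¹:Rˣ):R)), inlUnit u]
        + -milnorSymbol ![oneAddEps R (b * ((a⁻¹:Rˣ):R)),
            oneAddEps R (b * ((u⁻¹:Rˣ):R))] := by
    rw [← hA2]
    simp only [symbol_mul_left, symbol_mul_right, oneAddEps_neg, symbol_inv_right,
      symbol_inv_left, hAU]
    abel
  rw [two_zsmul]
  calc milnorSymbol ![oneAddEps R (b * ((a⁻¹:Rˣ):R)), oneAddEps R (b * ((u⁻¹:Rˣ):R))]
        + milnorSymbol ![oneAddEps R (b * ((a⁻¹:Rˣ):R)), oneAddEps R (b * ((u⁻¹:Rˣ):R))]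
      = -((-milnorSymbol ![inlUnit a, oneAddEps R (b * ((u⁻¹:Rˣ):R))]
          + milnorSymbol ![oneAddEps R (b * ((a⁻¹:Rˣ):R)), inlUnit u]
          + -milnorSymbol ![oneAddEps R (b * ((a⁻¹:Rˣ):R)),
              oneAddEps R (b * ((u⁻¹:Rˣ):R))])
        + (milnorSymbol ![inlUnit a, oneAddEps R (b * ((u⁻¹:Rˣ):R))]
          + -milnorSymbol ![oneAddEps R (b * ((a⁻¹:Rˣ):R)), inlUnit u]
          + -milnorSymbol ![oneAddEps R (b * ((a⁻¹:Rˣ):R)),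
              oneAddEps R (b * ((u⁻¹:Rˣ):R))])) := by abel
    _ = -((0 : MilnorK (DualNumber R) 2) + 0) := by rw [← e1, ← e2]
    _ = 0 := by simp
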